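/- arXiv:2205.11013 — 2 statements merged into one kernel-verified Lean document; each statement's English description precedes it below -/
import Mathlib

section
/- For t > 0 and x = (x₁,x₂) ∈ ℝ², the two families are summable and satisfy Σ_{(n,m)∈ℤ²} e^{−4π²(n²+m²)t} e^{2πi(n x₁ + m x₂)} = Σ_{(n,m)∈ℤ²} (1/(4πt)) e^{−((x₁−n)² + (x₂−m)²)/(4t)}. In particular the left-hand side, which defines the heat kernel Φ(t,x) on the torus, is a real number and is strictly positive. -/
open scoped Real

noncomputable section

/-- One term of the Fourier series defining the torus heat kernel. -/
noncomputable def heatTerm (t : ℝ) (x : ℝ × ℝ) (k : ℤ × ℤ) : ℂ :=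
  Complex.exp (-4 * (Real.pi : ℂ)^2 * ((k.1 : ℂ)^2 + (k.2 : ℂ)^2) * (t : ℂ)) *
    Complex.exp (2 * (Real.pi : ℂ) * Complex.I * ((k.1 : ℂ) * (x.1 : ℂ) + (k.2 : ℂ) * (x.2 : ℂ)))

/-- One term of the Gaussian (periodized heat kernel) series. -/
noncomputable def gaussTerm (t : ℝ) (x : ℝ × ℝ) (k : ℤ × ℤ) : ℝ :=
  (1 / (4 * Real.pi * t)) * Real.exp (-(((x.1 - k.1)^2 + (x.2 - k.2)^2) / (4 * t)))

namespace HeatAux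

/-- Summability of `exp (-a n² + b n)` over `ℤ` for `a > 0`. -/
lemma summable_exp_int {a : ℝ} (ha : 0 < a) (b : ℝ) :
    Summable fun n : ℤ => Real.exp (-a * n ^ 2 + b * n) := by
  have hτ : 0 < Complex.im (Complex.I * (a / Real.pi)) := by
    simp [Real.pi_pos, div_pos ha Real.pi_pos]
  have hs : Summable fun n : ℤ =>
      jacobiTheta₂_term n (-Complex.I * (b / (2 * Real.pi))) (Complex.I * (a / Real.pi)) :=
    (summable_jacobiTheta₂_term_iff _ _).mpr hτ
  have hre := hs.map Complex.reCLM Complex.continuous_re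
  refine hre.congr fun n => ?_
  have hterm : jacobiTheta₂_term n (-Complex.I * (b / (2 * Real.pi)))
      (Complex.I * (a / Real.pi)) = Complex.exp ((-a * n ^ 2 + b * n : ℝ) : ℂ) := by
    rw [jacobiTheta₂_term]
    congr 1
    have hπ : (Real.pi : ℂ) ≠ 0 := Complex.ofReal_ne_zero.mpr Real.pi_ne_zero
    push_cast
    field_simp
    ring_nf
    rw [Complex.I_sq]
    ring
  have hre2 : (jacobiTheta₂_term n (-Complex.I * (b / (2 * Real.pi)))
      (Complex.I * (a / Real.pi))).re = Real.exp (-a * n ^ 2 + b * n) := by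
    rw [hterm, ← Complex.ofReal_exp, Complex.ofReal_re]
  simpa [neg_mul] using hre2

/-- 1D heat Fourier term. -/
def F (t : ℝ) (y : ℝ) (n : ℤ) : ℂ :=
  Complex.exp (-4 * (Real.pi : ℂ) ^ 2 * (n : ℂ) ^ 2 * (t : ℂ) +
    2 * (Real.pi : ℂ) * Complex.I * (n : ℂ) * (y : ℂ))

/-- 1D Gaussian term. -/
def G (t : ℝ) (y : ℝ) (n : ℤ) : ℝ :=
  (1 / Real.sqrt (4 * Real.pi * t)) * Real.exp (-((y - n) ^ 2) / (4 * t))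

lemma G_pos (t : ℝ) (ht : 0 < t) (y : ℝ) (n : ℤ) : 0 < G t y n := by
  unfold G
  have : 0 < Real.sqrt (4 * Real.pi * t) := Real.sqrt_pos.mpr (by positivity)
  positivity

lemma summable_norm_F (t : ℝ) (ht : 0 < t) (y : ℝ) : Summable fun n : ℤ => ‖F t y n‖ := by
  refine (summable_exp_int (by positivity : (0:ℝ) < 4 * Real.pi ^ 2 * t) 0).congr
    fun n => ?_
  rw [show F t y n = Complex.exp (-4 * (Real.pi : ℂ) ^ 2 * (n : ℂ) ^ 2 * (t : ℂ) +
      2 * (Real.pi : ℂ) * Complex.I * (n : ℂ) * (y : ℂ)) from rfl,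
    Complex.norm_exp]
  congr 1
  have : (-4 * (Real.pi : ℂ) ^ 2 * (n : ℂ) ^ 2 * (t : ℂ) +
      2 * (Real.pi : ℂ) * Complex.I * (n : ℂ) * (y : ℂ)) =
      ((-(4 * Real.pi ^ 2 * t) * (n : ℝ) ^ 2 : ℝ) : ℂ) +
      ((2 * Real.pi * n * y : ℝ) : ℂ) * Complex.I := by
    push_cast; ring
  rw [this, Complex.add_re, Complex.ofReal_re, Complex.mul_I_re, Complex.ofReal_im]
  ring

lemma summable_F (t : ℝ) (ht : 0 < t) (y : ℝ) : Summable (F t y) := (summable_norm_F t ht y).of_norm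

lemma summable_G (t : ℝ) (ht : 0 < t) (y : ℝ) : Summable (G t y) := by
  unfold G
  apply Summable.mul_left
  have key := (summable_exp_int (show (0:ℝ) < 1 / (4 * t) by positivity)
    (y / (2 * t))).mul_left (Real.exp (-(y ^ 2) / (4 * t)))
  refine key.congr fun n => ?_
  rw [← Real.exp_add]
  congr 1
  field_simp
  ring

lemma oneD (t : ℝ) (ht : 0 < t) (y : ℝ) : (∑' n : ℤ, F t y n) = ((∑' n : ℤ, G t y n : ℝ) : ℂ) := by
  have hπt : (0:ℝ) < 4 * Real.pi * t := by positivity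
  have ha : 0 < ((( 4 * Real.pi * t : ℝ) : ℂ)).re := by
    simpa using hπt
  have key := Complex.tsum_exp_neg_quadratic ha (Complex.I * (y : ℂ))
  have hL : (∑' n : ℤ, F t y n) =
      ∑' n : ℤ, Complex.exp (-(Real.pi : ℂ) * ((4 * Real.pi * t : ℝ) : ℂ) * (n : ℂ) ^ 2 +
        2 * (Real.pi : ℂ) * (Complex.I * (y : ℂ)) * (n : ℂ)) := by
    refine tsum_congr fun n => ?_
    rw [F]
    congr 1
    push_cast
    ring
  have hR : ∀ n : ℤ, Complex.exp (-(Real.pi : ℂ) / ((4 * Real.pi * t : ℝ) : ℂ) *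
      ((n : ℂ) + Complex.I * (Complex.I * (y : ℂ))) ^ 2) =
      ((Real.exp (-((y - n) ^ 2) / (4 * t)) : ℝ) : ℂ) := by
    intro n
    rw [Complex.ofReal_exp]
    congr 1
    have hπ : (Real.pi : ℂ) ≠ 0 := Complex.ofReal_ne_zero.mpr Real.pi_ne_zero
    have ht' : (t : ℂ) ≠ 0 := Complex.ofReal_ne_zero.mpr ht.ne'
    push_cast
    rw [show Complex.I * (Complex.I * (y : ℂ)) = -(y : ℂ) by
      rw [← mul_assoc, Complex.I_mul_I]; ring]
    field_simp
    ring
  have hsqrt : (1 : ℂ) / (((4 * Real.pi * t : ℝ) : ℂ)) ^ ((1:ℂ)/2) =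
      ((1 / Real.sqrt (4 * Real.pi * t) : ℝ) : ℂ) := by
    have h1 : ((1:ℂ)/2) = (((1:ℝ)/2 : ℝ) : ℂ) := by norm_num
    rw [h1, ← Complex.ofReal_cpow hπt.le, ← Real.sqrt_eq_rpow]
    push_cast
    ring
  rw [hL, key, tsum_congr hR, hsqrt, ← Complex.ofReal_tsum, ← Complex.ofReal_mul]
  congr 1
  rw [← tsum_mul_left]
  exact tsum_congr fun n => rfl

end HeatAux

end

noncomputable section

/-- **Poisson summation for the torus heat kernel.**
For `t > 0` and `x ∈ ℝ²`, both families are summable,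
`Σ_{(n,m)∈ℤ²} e^{-4π²(n²+m²)t} e^{2πi(nx₁+mx₂)}
  = Σ_{(n,m)∈ℤ²} (1/(4πt)) e^{-((x₁-n)²+(x₂-m)²)/(4t)}`,
and in particular the left-hand side is a (strictly positive) real number. -/
theorem heat_kernel_poisson_summation (t : ℝ) (ht : 0 < t) (x : ℝ × ℝ) :
    Summable (heatTerm t x) ∧
    Summable (gaussTerm t x) ∧
    (∑' k : ℤ × ℤ, heatTerm t x k) = ((∑' k : ℤ × ℤ, gaussTerm t x k : ℝ) : ℂ) ∧
    0 < ∑' k : ℤ × ℤ, gaussTerm t x k := by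
  have hF1 := HeatAux.summable_norm_F t ht x.1
  have hF2 := HeatAux.summable_norm_F t ht x.2
  have hG1 := HeatAux.summable_G t ht x.1
  have hG2 := HeatAux.summable_G t ht x.2
  have hGn1 : Summable fun n : ℤ => ‖HeatAux.G t x.1 n‖ :=
    hG1.abs.congr fun n => (Real.norm_eq_abs _).symm
  have hGn2 : Summable fun n : ℤ => ‖HeatAux.G t x.2 n‖ :=
    hG2.abs.congr fun n => (Real.norm_eq_abs _).symm
  have hheat_eq : ∀ k : ℤ × ℤ,
      heatTerm t x k = HeatAux.F t x.1 k.1 * HeatAux.F t x.2 k.2 := by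
    rintro ⟨n, m⟩
    simp only [heatTerm, HeatAux.F]
    rw [← Complex.exp_add, ← Complex.exp_add]
    congr 1
    push_cast
    ring
  have hs : Real.sqrt (4 * Real.pi * t) * Real.sqrt (4 * Real.pi * t) = 4 * Real.pi * t :=
    Real.mul_self_sqrt (by positivity)
  have hgauss_eq : ∀ k : ℤ × ℤ,
      gaussTerm t x k = HeatAux.G t x.1 k.1 * HeatAux.G t x.2 k.2 := by
    rintro ⟨n, m⟩
    simp only [gaussTerm, HeatAux.G]
    rw [mul_mul_mul_comm, div_mul_div_comm, hs, one_mul, ← Real.exp_add]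
    congr 1
    ring
  have hsumHeat : Summable (heatTerm t x) :=
    (summable_mul_of_summable_norm hF1 hF2).congr fun k => (hheat_eq k).symm
  have hsumGauss : Summable (gaussTerm t x) :=
    (summable_mul_of_summable_norm hGn1 hGn2).congr fun k => (hgauss_eq k).symm
  refine ⟨hsumHeat, hsumGauss, ?_, ?_⟩
  · calc (∑' k : ℤ × ℤ, heatTerm t x k)
        = ∑' k : ℤ × ℤ, HeatAux.F t x.1 k.1 * HeatAux.F t x.2 k.2 := tsum_congr hheat_eq
      _ = (∑' n : ℤ, HeatAux.F t x.1 n) * (∑' n : ℤ, HeatAux.F t x.2 n) :=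
        (tsum_mul_tsum_of_summable_norm hF1 hF2).symm
      _ = ((∑' n : ℤ, HeatAux.G t x.1 n : ℝ) : ℂ) * ((∑' n : ℤ, HeatAux.G t x.2 n : ℝ) : ℂ) := by
        rw [HeatAux.oneD t ht x.1, HeatAux.oneD t ht x.2]
      _ = (((∑' n : ℤ, HeatAux.G t x.1 n) * (∑' n : ℤ, HeatAux.G t x.2 n) : ℝ) : ℂ) :=
        (Complex.ofReal_mul _ _).symm
      _ = ((∑' k : ℤ × ℤ, gaussTerm t x k : ℝ) : ℂ) := by
        rw [tsum_mul_tsum_of_summable_norm hGn1 hGn2]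
        exact_mod_cast congrArg (Complex.ofReal) (tsum_congr hgauss_eq).symm
  · refine Summable.tsum_pos hsumGauss (fun k => ?_) (0, 0) ?_
    · rw [gaussTerm]; positivity
    · rw [gaussTerm]; positivity


end
end

section
/- Let γ_n, γ be probability measures on 𝕋² such that γ_n → γ weakly. Let f : 𝕋² × 𝕋² → ℝ be bounded and Borel measurable, continuous at every point (x,y) with x ≠ y, and with f(x,x) = 0 for all x. Assume lim_{δ→0+} sup_n (γ_n ⊗ γ_n)( { (x,y) : r(x,y) ≤ δ } ) = 0. Then ∬_{𝕋²×𝕋²} f d(γ_n ⊗ γ_n) → ∬_{𝕋²×𝕋²} f d(γ ⊗ γ) as n → ∞. -/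
open MeasureTheory Filter Topology

noncomputable section

/-- The two-dimensional torus `ℝ²/ℤ²`, with Haar (Lebesgue) measure of total mass one. -/
abbrev T2 : Type := AddCircle (1:ℝ) × AddCircle (1:ℝ)

/-- The Euclidean torus metric `r(x,y) = inf_{k ∈ ℤ²} |x - y - k|`. -/
noncomputable def rT (x y : T2) : ℝ := Real.sqrt ((dist x.1 y.1)^2 + (dist x.2 y.2)^2)

instance : BorelSpace (T2 × T2) := Prod.borelSpace

instance : OpensMeasurableSpace (T2 × T2) := inferInstance

lemma rT_cont : Continuous fun p : T2 × T2 => rT p.1 p.2 := by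
  apply Real.continuous_sqrt.comp
  exact ((continuous_fst.fst.dist continuous_snd.fst).pow 2).add
    ((continuous_fst.snd.dist continuous_snd.snd).pow 2)

lemma rT_self (x : T2) : rT x x = 0 := by simp [rT]

lemma integrable_of_cont {X : Type*} [MeasurableSpace X] [TopologicalSpace X]
    [OpensMeasurableSpace X] [CompactSpace X] [MetricSpace X]
    (μ : Measure X) [IsFiniteMeasure μ] {g : X → ℝ} (hg : Continuous g) :
    Integrable g μ := by
  have := (BoundedContinuousFunction.mkOfCompact ⟨g, hg⟩).integrable μ
  exact this

lemma integral_dist_le {X : Type*} [MeasurableSpace X] (ν : Measure X) [IsProbabilityMeasure ν]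
    {h1 h2 : X → ℝ} (ih1 : Integrable h1 ν) (ih2 : Integrable h2 ν) {b : ℝ}
    (hb : ∀ y, |h1 y - h2 y| ≤ b) :
    |∫ y, h1 y ∂ν - ∫ y, h2 y ∂ν| ≤ b := by
  rw [← integral_sub ih1 ih2]
  have := norm_integral_le_of_norm_le_const (μ := ν) (f := fun y => h1 y - h2 y) (C := b)
    (ae_of_all _ fun y => by simpa using hb y)
  simpa [measure_univ] using this

lemma cont_partial {g : T2 × T2 → ℝ} (hg : Continuous g) (ν : Measure T2)
    [IsProbabilityMeasure ν] : Continuous (fun x : T2 => ∫ y, g (x, y) ∂ν) := by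
  rw [Metric.continuous_iff]
  intro x ε hε
  obtain ⟨δ, δpos, hδ⟩ := Metric.uniformContinuous_iff.mp
    (CompactSpace.uniformContinuous_of_continuous hg) (ε/2) (half_pos hε)
  refine ⟨δ, δpos, fun x' hx' => ?_⟩
  have key : ∀ y, |g (x', y) - g (x, y)| ≤ ε/2 := by
    intro y
    have hd : dist ((x', y) : T2 × T2) (x, y) < δ := by
      rw [Prod.dist_eq]
      simpa [δpos] using hx'
    simpa [Real.dist_eq] using (hδ hd).le
  have h1 : Integrable (fun y => g (x', y)) ν := integrable_of_cont ν (hg.comp (Continuous.prodMk_right x'))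
  have h2 : Integrable (fun y => g (x, y)) ν := integrable_of_cont ν (hg.comp (Continuous.prodMk_right x))
  rw [Real.dist_eq]
  exact lt_of_le_of_lt (integral_dist_le ν h1 h2 key) (half_lt_self hε)

lemma prod_weak_conv (γseq : ℕ → Measure T2) (γ : Measure T2)
    [∀ n, IsProbabilityMeasure (γseq n)] [IsProbabilityMeasure γ]
    (hweak : ∀ g : T2 → ℝ, Continuous g →
      Tendsto (fun n => ∫ x, g x ∂(γseq n)) atTop (𝓝 (∫ x, g x ∂γ)))
    (g : T2 × T2 → ℝ) (hg : Continuous g) :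
    Tendsto (fun n => ∫ p, g p ∂((γseq n).prod (γseq n))) atTop
      (𝓝 (∫ p, g p ∂(γ.prod γ))) := by
  rw [Metric.tendsto_nhds]
  intro ε hε
  obtain ⟨δ, δpos, hδ⟩ := Metric.uniformContinuous_iff.mp
    (CompactSpace.uniformContinuous_of_continuous hg) (ε/8) (by positivity)
  obtain ⟨t, ht⟩ := isCompact_univ.elim_finite_subcover (fun x : T2 => Metric.ball x δ)
    (fun x => Metric.isOpen_ball) (fun x _ => Set.mem_iUnion.mpr ⟨x, Metric.mem_ball_self δpos⟩)
  have gb : ∀ (x i : T2), dist x i < δ → ∀ y, |g (x, y) - g (i, y)| ≤ ε/8 := by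
    intro x i hxi y
    have hd : dist ((x, y) : T2 × T2) (i, y) < δ := by
      rw [Prod.dist_eq]; simpa [δpos] using hxi
    simpa [Real.dist_eq] using (hδ hd).le
  have intg : ∀ (x : T2) (ν : Measure T2) [IsFiniteMeasure ν],
      Integrable (fun y => g (x, y)) ν := fun x ν _ =>
    integrable_of_cont ν (hg.comp (Continuous.prodMk_right x))
  have Fcont : ∀ (ν : Measure T2) [IsProbabilityMeasure ν],
      Continuous (fun x : T2 => ∫ y, g (x, y) ∂ν) := fun ν _ => cont_partial hg ν
  have hpt : ∀ i ∈ t, ∀ᶠ n in atTop,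
      |(∫ y, g (i, y) ∂(γseq n)) - ∫ y, g (i, y) ∂γ| < ε/8 := by
    intro i _
    have := Metric.tendsto_nhds.mp (hweak (fun y => g (i, y)) (hg.comp (Continuous.prodMk_right i)))
      (ε/8) (by positivity)
    simpa [Real.dist_eq] using this
  have h2 := Metric.tendsto_nhds.mp
    (hweak (fun x => ∫ y, g (x, y) ∂γ) (Fcont γ)) (ε/2) (half_pos hε)
  filter_upwards [(eventually_all_finset t).mpr hpt, h2] with n hn h2n
  have key : ∀ x : T2, |(∫ y, g (x, y) ∂(γseq n)) - ∫ y, g (x, y) ∂γ| ≤ 3*(ε/8) := by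
    intro x
    obtain ⟨i, hi, hxi⟩ : ∃ i ∈ t, x ∈ Metric.ball i δ := by
      simpa using ht (Set.mem_univ x)
    rw [Metric.mem_ball] at hxi
    have e1 : |(∫ y, g (x, y) ∂(γseq n)) - ∫ y, g (i, y) ∂(γseq n)| ≤ ε/8 :=
      integral_dist_le _ (intg x _) (intg i _) (gb x i hxi)
    have e2 : |(∫ y, g (i, y) ∂γ) - ∫ y, g (x, y) ∂γ| ≤ ε/8 :=
      integral_dist_le _ (intg i _) (intg x _) (fun y => by
        rw [abs_sub_comm]; exact gb x i hxi y)
    have tri : |(∫ y, g (x, y) ∂(γseq n)) - ∫ y, g (x, y) ∂γ| ≤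
        |(∫ y, g (x, y) ∂(γseq n)) - ∫ y, g (i, y) ∂(γseq n)| +
        (|(∫ y, g (i, y) ∂(γseq n)) - ∫ y, g (i, y) ∂γ| +
         |(∫ y, g (i, y) ∂γ) - ∫ y, g (x, y) ∂γ|) :=
      (abs_sub_le _ _ _).trans (add_le_add le_rfl (abs_sub_le _ _ _))
    have := hn i hi
    linarith
  have hint : Integrable g ((γseq n).prod (γseq n)) := integrable_of_cont _ hg
  have hintγ : Integrable g (γ.prod γ) := integrable_of_cont _ hg
  rw [Real.dist_eq, integral_prod g hint, integral_prod g hintγ]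
  have i1 : Integrable (fun x => ∫ y, g (x, y) ∂(γseq n)) (γseq n) :=
    integrable_of_cont _ (Fcont (γseq n))
  have i2 : Integrable (fun x => ∫ y, g (x, y) ∂γ) (γseq n) :=
    integrable_of_cont _ (Fcont γ)
  have step1 : |(∫ x, (∫ y, g (x, y) ∂(γseq n)) ∂(γseq n)) -
      ∫ x, (∫ y, g (x, y) ∂γ) ∂(γseq n)| ≤ 3*(ε/8) :=
    integral_dist_le _ i1 i2 key
  have tri : |(∫ x, (∫ y, g (x, y) ∂(γseq n)) ∂(γseq n)) -
      ∫ x, (∫ y, g (x, y) ∂γ) ∂γ| ≤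
      |(∫ x, (∫ y, g (x, y) ∂(γseq n)) ∂(γseq n)) - ∫ x, (∫ y, g (x, y) ∂γ) ∂(γseq n)| +
      |(∫ x, (∫ y, g (x, y) ∂γ) ∂(γseq n)) - ∫ x, (∫ y, g (x, y) ∂γ) ∂γ| :=
    abs_sub_le _ _ _
  rw [Real.dist_eq] at h2n
  linarith

/-- **Off-diagonal continuity of quadratic functionals under weak convergence.**
Let `γ_n → γ` weakly (probability measures on `𝕋²`), let `f` be bounded, Borel, zero on
the diagonal and continuous off the diagonal, and assume the uniform concentration
condition `lim_{δ→0+} sup_n (γ_n ⊗ γ_n)({r(x,y) ≤ δ}) = 0`.  Then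
`∬ f d(γ_n ⊗ γ_n) → ∬ f d(γ ⊗ γ)`. -/
theorem quadratic_functional_weak_convergence
    (γseq : ℕ → Measure T2) (γ : Measure T2)
    [∀ n, IsProbabilityMeasure (γseq n)] [IsProbabilityMeasure γ]
    (hweak : ∀ g : T2 → ℝ, Continuous g →
      Filter.Tendsto (fun n => ∫ x, g x ∂(γseq n)) Filter.atTop (nhds (∫ x, g x ∂γ)))
    (f : T2 × T2 → ℝ) (hf_meas : Measurable f)
    (hf_bdd : ∃ C : ℝ, ∀ p, |f p| ≤ C)
    (hf_cont : ∀ p : T2 × T2, p.1 ≠ p.2 → ContinuousAt f p)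
    (hf_diag : ∀ x : T2, f (x, x) = 0)
    (hconc : Filter.Tendsto
      (fun δ : ℝ => ⨆ n, ((γseq n).prod (γseq n)) {p : T2 × T2 | rT p.1 p.2 ≤ δ})
      (nhdsWithin 0 (Set.Ioi 0)) (nhds 0)) :
    Filter.Tendsto (fun n => ∫ p, f p ∂((γseq n).prod (γseq n))) Filter.atTop
      (nhds (∫ p, f p ∂(γ.prod γ))) := by
  obtain ⟨C₀, hC₀⟩ := hf_bdd
  set C := max C₀ 1 with hCdef
  have hC : ∀ p, |f p| ≤ C := fun p => (hC₀ p).trans (le_max_left _ _)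
  have hCpos : (0:ℝ) < C := lt_of_lt_of_le one_pos (le_max_right _ _)
  -- weak convergence of product measures
  set Pn : ℕ → ProbabilityMeasure (T2 × T2) := fun n => ⟨(γseq n).prod (γseq n), inferInstance⟩
    with hPn
  set P : ProbabilityMeasure (T2 × T2) := ⟨γ.prod γ, inferInstance⟩ with hPdef
  have hP : Tendsto Pn atTop (𝓝 P) := by
    rw [ProbabilityMeasure.tendsto_iff_forall_integral_tendsto]
    intro h
    exact prod_weak_conv γseq γ hweak h h.continuous
  have hport : ∀ δ0 : ℝ, (γ.prod γ) {p : T2 × T2 | rT p.1 p.2 < δ0} ≤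
      atTop.liminf (fun n => ((γseq n).prod (γseq n)) {p : T2 × T2 | rT p.1 p.2 < δ0}) := by
    intro δ0
    have hopen : IsOpen {p : T2 × T2 | rT p.1 p.2 < δ0} := isOpen_lt rT_cont continuous_const
    exact ProbabilityMeasure.le_liminf_measure_open_of_tendsto hP hopen
  rw [Metric.tendsto_nhds]
  intro ε hε
  have hηpos : (0:ℝ) < ε/(8*C) := by positivity
  set η := ENNReal.ofReal (ε/(8*C)) with hηdef
  have hη : (0:ENNReal) < η := ENNReal.ofReal_pos.mpr hηpos
  obtain ⟨δ0, hδ0sup, hδ0pos⟩ := ((hconc.eventually_lt_const hη).and self_mem_nhdsWithin).exists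
  set δ := δ0/4 with hδdef
  have δpos : 0 < δ := by positivity
  set χ : T2 × T2 → ℝ := fun p => min 1 (max 0 (rT p.1 p.2 / δ - 1)) with hχdef
  have hχcont : Continuous χ :=
    continuous_const.min (continuous_const.max ((rT_cont.div_const δ).sub continuous_const))
  have hχ0 : ∀ p : T2 × T2, rT p.1 p.2 ≤ δ → χ p = 0 := by
    intro p hp
    have h1 : rT p.1 p.2 / δ - 1 ≤ 0 := by
      rw [sub_nonpos, div_le_one δpos]; exact hp
    simp [hχdef, max_eq_left h1]
  have hχ1 : ∀ p : T2 × T2, 2*δ ≤ rT p.1 p.2 → χ p = 1 := by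
    intro p hp
    have h1 : (1:ℝ) ≤ rT p.1 p.2 / δ - 1 := by
      rw [le_sub_iff_add_le, le_div_iff₀ δpos]; linarith
    have h2 : max 0 (rT p.1 p.2 / δ - 1) = rT p.1 p.2 / δ - 1 :=
      max_eq_right (by linarith)
    simp [hχdef, h2, min_eq_left h1]
  have hχ01 : ∀ p, 0 ≤ χ p ∧ χ p ≤ 1 := fun p =>
    ⟨le_min zero_le_one (le_max_left _ _), min_le_left _ _⟩
  set g : T2 × T2 → ℝ := fun p => f p * χ p with hgdef
  have hgcont : Continuous g := by
    rw [continuous_iff_continuousAt]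
    intro p
    by_cases hp : p.1 = p.2
    · have h0 : rT p.1 p.2 = 0 := by rw [hp]; exact rT_self _
      have hopen : IsOpen {q : T2 × T2 | rT q.1 q.2 < δ} := isOpen_lt rT_cont continuous_const
      have hmem : p ∈ {q : T2 × T2 | rT q.1 q.2 < δ} := by
        simpa [Set.mem_setOf_eq, h0] using δpos
      have hev : ∀ᶠ q in 𝓝 p, g q = 0 := by
        filter_upwards [hopen.mem_nhds hmem] with q hq
        simp [hgdef, hχ0 q hq.le]
      exact Filter.EventuallyEq.continuousAt hev
    · exact (hf_cont p hp).mul hχcont.continuousAt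
  set S : Set (T2 × T2) := {p | rT p.1 p.2 ≤ 2*δ} with hSdef
  have key : ∀ (μ : Measure (T2 × T2)), IsProbabilityMeasure μ →
      |(∫ p, f p ∂μ) - ∫ p, g p ∂μ| ≤ C * (μ S).toReal := by
    intro μ hμ
    have hfint : Integrable f μ := ⟨hf_meas.aestronglyMeasurable,
      HasFiniteIntegral.of_bounded (C := C) (ae_of_all _ fun p => by simpa using hC p)⟩
    have hgint : Integrable g μ := integrable_of_cont μ hgcont
    rw [← integral_sub hfint hgint]
    rw [← setIntegral_eq_integral_of_forall_compl_eq_zero (s := S)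
      (f := fun p => f p - g p) (fun p hp => by
        have h1 : 2*δ ≤ rT p.1 p.2 := le_of_not_ge hp
        simp [hgdef, hχ1 p h1])]
    have hb : ∀ p ∈ S, ‖f p - g p‖ ≤ C := by
      intro p _
      have h1 : f p - g p = f p * (1 - χ p) := by rw [hgdef]; ring
      rw [Real.norm_eq_abs, h1, abs_mul, abs_of_nonneg (by linarith [(hχ01 p).2] : (0:ℝ) ≤ 1 - χ p)]
      calc |f p| * (1 - χ p) ≤ C * 1 :=
            mul_le_mul (hC p) (by linarith [(hχ01 p).1]) (by linarith [(hχ01 p).2]) hCpos.le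
        _ = C := mul_one C
    simpa [Real.norm_eq_abs, measureReal_def] using norm_setIntegral_le_of_norm_le_const
      (measure_lt_top μ S) hb
  -- bounds on the measures of S
  have hSn : ∀ n, ((γseq n).prod (γseq n)) S ≤ η := by
    intro n
    have h1 : S ⊆ {p : T2 × T2 | rT p.1 p.2 ≤ δ0} := fun p hp => by
      simp only [hSdef, Set.mem_setOf_eq] at hp ⊢; linarith
    refine le_trans (measure_mono h1) ?_
    exact le_trans (le_iSup (fun n => ((γseq n).prod (γseq n)) {p : T2 × T2 | rT p.1 p.2 ≤ δ0}) n)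
      hδ0sup.le
  have hSγ : (γ.prod γ) S ≤ η := by
    have h1 : S ⊆ {p : T2 × T2 | rT p.1 p.2 < δ0} := fun p hp => by
      simp only [hSdef, Set.mem_setOf_eq] at hp ⊢; linarith
    have h2 : ∀ n, ((γseq n).prod (γseq n)) {p : T2 × T2 | rT p.1 p.2 < δ0} ≤ η := by
      intro n
      have hsub : {p : T2 × T2 | rT p.1 p.2 < δ0} ⊆ {p : T2 × T2 | rT p.1 p.2 ≤ δ0} :=
        fun p hp => by
          simp only [Set.mem_setOf_eq] at hp ⊢; exact le_of_lt hp
      exact le_trans (measure_mono hsub)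
        (le_trans (le_iSup (fun n => ((γseq n).prod (γseq n)) {p : T2 × T2 | rT p.1 p.2 ≤ δ0}) n)
          hδ0sup.le)
    refine le_trans (measure_mono h1) (le_trans (hport δ0) ?_)
    exact le_trans liminf_le_limsup
      (limsup_le_of_le (by isBoundedDefault) (Eventually.of_forall h2))
  have htoReal : ∀ (μ : Measure (T2 × T2)), μ S ≤ η → C * (μ S).toReal ≤ ε/8 := by
    intro μ hμ
    have h1 : (μ S).toReal ≤ ε/(8*C) := ENNReal.toReal_le_of_le_ofReal hηpos.le hμ
    calc C * (μ S).toReal ≤ C * (ε/(8*C)) := by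
          exact mul_le_mul_of_nonneg_left h1 hCpos.le
      _ = ε/8 := by field_simp
  have hmid := Metric.tendsto_nhds.mp (prod_weak_conv γseq γ hweak g hgcont) (ε/2) (half_pos hε)
  filter_upwards [hmid] with n hn
  rw [Real.dist_eq]
  have t1 : |(∫ p, f p ∂((γseq n).prod (γseq n))) - ∫ p, g p ∂((γseq n).prod (γseq n))| ≤ ε/8 :=
    (key _ inferInstance).trans (htoReal _ (hSn n))
  have t3 : |(∫ p, g p ∂(γ.prod γ)) - ∫ p, f p ∂(γ.prod γ)| ≤ ε/8 := by
    rw [abs_sub_comm]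
    exact (key _ inferInstance).trans (htoReal _ hSγ)
  rw [Real.dist_eq] at hn
  have tri : |(∫ p, f p ∂((γseq n).prod (γseq n))) - ∫ p, f p ∂(γ.prod γ)| ≤
      |(∫ p, f p ∂((γseq n).prod (γseq n))) - ∫ p, g p ∂((γseq n).prod (γseq n))| +
      (|(∫ p, g p ∂((γseq n).prod (γseq n))) - ∫ p, g p ∂(γ.prod γ)| +
       |(∫ p, g p ∂(γ.prod γ)) - ∫ p, f p ∂(γ.prod γ)|) :=
    (abs_sub_le _ _ _).trans (add_le_add le_rfl (abs_sub_le _ _ _))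
  linarith
end
end
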